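/- For all positive integers k, l and t, one has m(kl, t) ≤ l · m(k, t). -/

import Mathlib

open SimpleGraph

/-- `D` is a `k`-dominating independent set of `G`: `D` is independent and every vertex
outside `D` has at least `k` neighbours in `D`. -/
def IsKDIS {V : Type*} [Fintype V] (G : SimpleGraph V) (k : ℕ) (D : Finset V) : Prop :=
  (∀ x ∈ D, ∀ y ∈ D, ¬ G.Adj x y) ∧
  ∀ v : V, v ∉ D → k ≤ (G.neighborSet v ∩ (D : Set V)).ncard

/-- The number of `k`-dominating independent sets of `G`. -/
noncomputable def numKDIS {V : Type*} [Fintype V] (G : SimpleGraph V) (k : ℕ) : ℕ :=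
  Nat.card {D : Finset V // IsKDIS G k D}

/-- `mi k n`: the maximum number of `k`-dominating independent sets in a simple graph
on `n` vertices. -/
noncomputable def mi (k n : ℕ) : ℕ :=
  sSup {m : ℕ | ∃ G : SimpleGraph (Fin n), numKDIS G k = m}

/-- `mDIS k t`: the smallest `n` such that some simple graph on `n` vertices has at least
`t` `k`-dominating independent sets. -/
noncomputable def mDIS (k t : ℕ) : ℕ :=
  sInf {n : ℕ | ∃ G : SimpleGraph (Fin n), t ≤ numKDIS G k}

/-- ncard of a product of sets in finite types. -/
lemma ncard_prod_aux {α β : Type*} [Fintype α] [Fintype β] (s : Set α) (t : Set β) :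
    (s ×ˢ t).ncard = s.ncard * t.ncard := by
  classical
  rw [Set.ncard_eq_toFinset_card', Set.ncard_eq_toFinset_card', Set.ncard_eq_toFinset_card',
    Set.toFinset_prod, Finset.card_product]

/-- Antitonicity in k. -/
lemma numKDIS_anti {V : Type*} [Fintype V] (G : SimpleGraph V) {k k' : ℕ} (h : k ≤ k') :
    numKDIS G k' ≤ numKDIS G k := by
  apply Nat.card_le_card_of_injective
    (fun D => (⟨D.1, D.2.1, fun v hv => le_trans h (D.2.2 v hv)⟩ :
      {D : Finset V // IsKDIS G k D}))
  intro a b hab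
  obtain ⟨a, ha⟩ := a; obtain ⟨b, hb⟩ := b
  simpa using congrArg Subtype.val hab

lemma blowup_aux {k l n : ℕ} (hl : 1 ≤ l) (G : SimpleGraph (Fin n)) :
    ∃ H : SimpleGraph (Fin (l * n)), numKDIS G k ≤ numKDIS H (k * l) := by
  classical
  set e : Fin (l * n) ≃ Fin l × Fin n := finProdFinEquiv.symm with he
  refine ⟨{ Adj := fun x y => G.Adj (e x).2 (e y).2,
            symm := ⟨fun x y h => G.adj_symm h⟩,
            loopless := ⟨fun x h => G.irrefl h⟩ }, ?_⟩
  set H : SimpleGraph (Fin (l * n)) :=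
    { Adj := fun x y => G.Adj (e x).2 (e y).2,
      symm := ⟨fun x y h => G.adj_symm h⟩,
      loopless := ⟨fun x h => G.irrefl h⟩ } with hH
  have hmem : ∀ (D : Finset (Fin n)) (x : Fin (l * n)),
      x ∈ Finset.univ.filter (fun x => (e x).2 ∈ D) ↔ (e x).2 ∈ D := by
    intro D x; simp
  apply Nat.card_le_card_of_injective
    (fun D => (⟨Finset.univ.filter (fun x => (e x).2 ∈ D.1), ?_⟩ :
      {D : Finset (Fin (l * n)) // IsKDIS H (k * l) D}))
  · -- injectivity
    intro a b hab
    apply Subtype.ext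
    ext v
    have := congrArg Subtype.val hab
    have h2 := congrArg (fun (S : Finset (Fin (l * n))) => e.symm (⟨0, hl⟩, v) ∈ S) this
    simpa [hmem] using h2
  · -- IsKDIS
    obtain ⟨D, hind, hdom⟩ := D
    constructor
    · intro x hx y hy hadj
      exact hind _ ((hmem D x).1 hx) _ ((hmem D y).1 hy) hadj
    · intro v hv
      have hvD : (e v).2 ∉ D := fun h => hv ((hmem D v).2 h)
      have hset : H.neighborSet v ∩ (↑(Finset.univ.filter (fun x => (e x).2 ∈ D))) =
          e ⁻¹' ((Set.univ : Set (Fin l)) ×ˢ ((G.neighborSet (e v).2) ∩ ↑D)) := by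
        ext y
        simp [H, hH, Set.mem_preimage, Set.mem_prod, SimpleGraph.mem_neighborSet, and_comm]
      rw [hset]
      have himg : e ⁻¹' ((Set.univ : Set (Fin l)) ×ˢ ((G.neighborSet (e v).2) ∩ ↑D)) =
          e.symm '' ((Set.univ : Set (Fin l)) ×ˢ ((G.neighborSet (e v).2) ∩ ↑D)) := by
        rw [Equiv.image_eq_preimage_symm]
        simp
      rw [himg, Set.ncard_image_of_injective _ e.symm.injective, ncard_prod_aux]
      have : (Set.univ : Set (Fin l)).ncard = l := by
        simp [Set.ncard_univ]
      rw [this]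
      calc k * l = l * k := Nat.mul_comm k l
        _ ≤ l * ((G.neighborSet (e v).2) ∩ ↑D).ncard :=
          Nat.mul_le_mul_left l (hdom _ hvD)

theorem mDIS_mul_le (k l t : ℕ) (hk : 1 ≤ k) (hl : 1 ≤ l) (ht : 1 ≤ t) :
    mDIS (k * l) t ≤ l * mDIS k t := by
  set S : Set ℕ := {n : ℕ | ∃ G : SimpleGraph (Fin n), t ≤ numKDIS G k} with hS
  by_cases hne : S.Nonempty
  · have hmem := Nat.sInf_mem hne
    obtain ⟨G, hG⟩ := hmem
    obtain ⟨H, hH⟩ := blowup_aux (k := k) hl G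
    exact Nat.sInf_le ⟨H, le_trans hG hH⟩
  · have h1 : mDIS k t = 0 := by
      rw [mDIS, ← hS, Set.not_nonempty_iff_eq_empty.1 hne, Nat.sInf_empty]
    have h2 : mDIS (k * l) t = 0 := by
      rw [mDIS]
      have : {n : ℕ | ∃ G : SimpleGraph (Fin n), t ≤ numKDIS G (k * l)} = ∅ := by
        rw [Set.eq_empty_iff_forall_notMem]
        rintro n ⟨G, hG⟩
        exact hne ⟨n, G, le_trans hG (numKDIS_anti G (Nat.le_mul_of_pos_right k hl))⟩
      rw [this, Nat.sInf_empty]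
    omega
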